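/- arXiv:1904.02645 — 2 statements merged into one kernel-verified Lean document; each statement's English description precedes it below -/
import Mathlib

section
/- Let X be a Peano continuum with more than one point and let g : [0,1] → X be a continuous surjection. Then there exist a continuous surjection ĝ : [0,1] → X that is not constant on any nondegenerate subinterval of [0,1], and a monotone nondecreasing continuous surjection m : [0,1] → [0,1], such that g = ĝ ∘ m. -/
open Topology Set Filter

/-- A free arc of `X`: an open subset homeomorphic to `(0,1)`, maximal under inclusion
among open subsets homeomorphic to `(0,1)`. -/
def IsFreeArc {X : Type*} [TopologicalSpace X] (e : Set X) : Prop :=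
  IsOpen e ∧ Nonempty (e ≃ₜ Set.Ioo (0:ℝ) 1) ∧
    ∀ e' : Set X, IsOpen e' → Nonempty (e' ≃ₜ Set.Ioo (0:ℝ) 1) → e ⊆ e' → e' = e

/-- The ground space of `X`: the complement of the union of all free arcs. -/
def ground (X : Type*) [TopologicalSpace X] : Set X :=
  {x : X | ∀ e : Set X, IsFreeArc e → x ∉ e}

/-- The edge cut determined by a partition `(A, B)` of the ground space. -/
def edgeCut {X : Type*} [TopologicalSpace X] (A B : Set X) : Set (Set X) :=
  {e : Set X | IsFreeArc e ∧ (closure e ∩ A).Nonempty ∧ (closure e ∩ B).Nonempty}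

/-- `X` satisfies the even-cut condition: every edge cut is finite of even cardinality. -/
def EvenCutCondition (X : Type*) [TopologicalSpace X] : Prop :=
  ∀ A B : Set X, IsClosed A → IsClosed B → A.Nonempty → B.Nonempty → Disjoint A B →
    A ∪ B = ground X → (edgeCut A B).Finite ∧ Even (edgeCut A B).ncard

/-- A continuous surjection onto `X` is edge-wise Eulerian if the preimage of every
interior point of every free arc is a singleton. -/
def EdgewiseEulerian {D X : Type*} [TopologicalSpace X] (g : D → X) : Prop :=
  ∀ e : Set X, IsFreeArc e → ∀ x ∈ e, ∃ t : D, g ⁻¹' {x} = {t}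

/-- Strongly irreducible: no proper closed subset of the domain maps onto everything. -/
def StronglyIrreducible {D X : Type*} [TopologicalSpace D] (g : D → X) : Prop :=
  ∀ A : Set D, IsClosed A → A ≠ Set.univ → g '' A ≠ Set.univ

/-- An arc: a subspace homeomorphic to `[0,1]`. -/
def IsArc {D : Type*} [TopologicalSpace D] (A : Set D) : Prop :=
  Nonempty (A ≃ₜ Set.Icc (0:ℝ) 1)

/-- A subcontinuum: a nonempty closed connected subset. -/
def IsSubcontinuum {D : Type*} [TopologicalSpace D] (A : Set D) : Prop :=
  IsClosed A ∧ IsConnected A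

/-- Arcwise increasing: images of strictly nested arcs are strictly nested. -/
def ArcwiseIncreasing {D X : Type*} [TopologicalSpace D] (g : D → X) : Prop :=
  ∀ A B : Set D, IsArc A → IsArc B → A ⊂ B → g '' A ⊂ g '' B

/-- Hereditarily irreducible: images of strictly nested subcontinua are strictly nested. -/
def HereditarilyIrreducible {D X : Type*} [TopologicalSpace D] (g : D → X) : Prop :=
  ∀ A B : Set D, IsSubcontinuum A → IsSubcontinuum B → A ⊂ B → g '' A ⊂ g '' B

/-- Irreducible: no proper subcontinuum of the domain maps onto everything. -/
def IrreducibleMap {D X : Type*} [TopologicalSpace D] (g : D → X) : Prop :=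
  ∀ K : Set D, IsSubcontinuum K → K ≠ Set.univ → g '' K ≠ Set.univ

/-- Almost injective: the points of injectivity are dense in the domain. -/
def AlmostInjective {D X : Type*} [TopologicalSpace D] (g : D → X) : Prop :=
  Dense {x : D | ∀ y : D, g y = g x → y = x}


open Set Metric Bornology

section MLAux
variable {X : Type*} [MetricSpace X]

/-- Auxiliary: diameter of the image of `[a, a ⊔ t]`. -/
noncomputable def mlF (g : unitInterval → X) (a t : unitInterval) : ℝ :=
  Metric.diam (g '' Set.Icc a (max a t))

/-- Auxiliary: weighted sum of `mlF` along a dense sequence. -/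
noncomputable def mlM (g : unitInterval → X) (q : ℕ → unitInterval) (t : unitInterval) : ℝ :=
  ∑' n, (1/2:ℝ)^n * mlF g (q n) t

variable {g : unitInterval → X} (hg : Continuous g) (q : ℕ → unitInterval)
include hg

omit hg in lemma mlF_nonneg (a t : unitInterval) : 0 ≤ mlF g a t := Metric.diam_nonneg

lemma ml_bounded (A : Set unitInterval) : IsBounded (g '' A) :=
  (isCompact_range hg).isBounded.subset (image_subset_range _ _)

lemma mlF_le (a t : unitInterval) : mlF g a t ≤ Metric.diam (Set.range g) :=
  Metric.diam_mono (image_subset_range _ _) (isCompact_range hg).isBounded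

lemma mlF_mono (a : unitInterval) : Monotone (mlF g a) := by
  intro s t hst
  exact Metric.diam_mono (image_mono (Icc_subset_Icc le_rfl (max_le_max le_rfl hst)))
    (ml_bounded hg _)

lemma mlM_summable (t : unitInterval) :
    Summable (fun n => (1/2:ℝ)^n * mlF g (q n) t) := by
  apply Summable.of_nonneg_of_le (fun n => mul_nonneg (by positivity) (mlF_nonneg _ _))
    (fun n => mul_le_mul_of_nonneg_left (mlF_le hg _ _) (by positivity))
  exact summable_geometric_two.mul_right _

lemma mlM_mono : Monotone (mlM g q) := by
  intro s t hst
  exact Summable.tsum_le_tsum (fun n => mul_le_mul_of_nonneg_left (mlF_mono hg _ hst) (by positivity))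
    (mlM_summable hg q s) (mlM_summable hg q t)

lemma mlF_diff_le {s t : unitInterval} (hst : s ≤ t) (a : unitInterval) :
    mlF g a t ≤ mlF g a s + Metric.diam (g '' Set.Icc s t) := by
  rcases le_or_gt a s with h | h
  · rw [mlF, mlF, max_eq_right h, max_eq_right (h.trans hst),
      ← Set.Icc_union_Icc_eq_Icc h hst, Set.image_union]
    exact Metric.diam_union' ⟨g s, ⟨s, ⟨h, le_rfl⟩, rfl⟩, ⟨s, ⟨le_rfl, hst⟩, rfl⟩⟩
  · have hs0 : mlF g a s = 0 := by
      rw [mlF, max_eq_left h.le, Set.Icc_self, Set.image_singleton, Metric.diam_singleton]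
    rw [hs0, zero_add]
    rcases le_or_gt a t with h2 | h2
    · rw [mlF, max_eq_right h2]
      exact Metric.diam_mono (image_mono (Icc_subset_Icc h.le le_rfl)) (ml_bounded hg _)
    · rw [mlF, max_eq_left h2.le, Set.Icc_self, Set.image_singleton, Metric.diam_singleton]
      exact Metric.diam_nonneg

lemma mlM_diff_le {s t : unitInterval} (hst : s ≤ t) :
    mlM g q t ≤ mlM g q s + 2 * Metric.diam (g '' Set.Icc s t) := by
  have h1 : mlM g q t ≤ ∑' n, ((1/2:ℝ)^n * mlF g (q n) s
      + (1/2:ℝ)^n * Metric.diam (g '' Set.Icc s t)) := by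
    apply Summable.tsum_le_tsum _ (mlM_summable hg q t)
    · exact ((mlM_summable hg q s).add ((summable_geometric_two).mul_right _))
    · intro n
      rw [← mul_add]
      exact mul_le_mul_of_nonneg_left (mlF_diff_le hg hst _) (by positivity)
  rw [Summable.tsum_add (mlM_summable hg q s) ((summable_geometric_two).mul_right _),
    tsum_mul_right, tsum_geometric_two] at h1
  exact h1

omit hg in lemma mlF_const {s t : unitInterval} (hst : s ≤ t)
    (hc : ∀ u ∈ Set.Icc s t, g u = g t) (a : unitInterval) :
    mlF g a s = mlF g a t := by
  rcases le_or_gt a s with h | h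
  · rw [mlF, mlF, max_eq_right h, max_eq_right (h.trans hst)]
    congr 1
    apply Set.Subset.antisymm (image_mono (Icc_subset_Icc le_rfl hst))
    rintro x ⟨u, ⟨hu1, hu2⟩, rfl⟩
    rcases le_or_gt u s with h3 | h3
    · exact ⟨u, ⟨hu1, h3⟩, rfl⟩
    · refine ⟨s, ⟨h, le_rfl⟩, ?_⟩
      rw [hc s ⟨le_rfl, hst⟩, hc u ⟨h3.le, hu2⟩]
  · have hs0 : mlF g a s = 0 := by
      rw [mlF, max_eq_left h.le, Set.Icc_self, Set.image_singleton, Metric.diam_singleton]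
    rcases le_or_gt a t with h2 | h2
    · have : g '' Set.Icc a (max a t) = {g t} := by
        rw [max_eq_right h2]
        apply Set.Subset.antisymm
        · rintro x ⟨u, ⟨hu1, hu2⟩, rfl⟩
          exact hc u ⟨h.le.trans hu1, hu2⟩
        · exact Set.singleton_subset_iff.2 ⟨t, ⟨h2, le_rfl⟩, rfl⟩
      rw [hs0, mlF, this, Metric.diam_singleton]
    · rw [hs0, mlF, max_eq_left h2.le, Set.Icc_self, Set.image_singleton,
        Metric.diam_singleton]

lemma mlM_const {s t : unitInterval} (hst : s ≤ t)
    (hc : ∀ u ∈ Set.Icc s t, g u = g t) :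
    mlM g q s = mlM g q t := by
  unfold mlM
  congr 1
  funext n
  rw [mlF_const hst hc]

lemma mlM_strict (hq : DenseRange q) {s t : unitInterval} (hst : s ≤ t)
    (hnc : ¬ ∀ u ∈ Set.Icc s t, g u = g t) :
    mlM g q s < mlM g q t := by
  push_neg at hnc
  obtain ⟨u, ⟨hus, hut⟩, hgu⟩ := hnc
  have hult : u < t := lt_of_le_of_ne hut (fun h => hgu (by rw [h]))
  obtain ⟨δ, hδ, hδ2⟩ := Metric.continuous_iff.mp hg u (dist (g u) (g t)) (dist_pos.2 hgu)
  -- pick a point w strictly between u and t, close to u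
  set r : ℝ := min (((u:ℝ) + t)/2) ((u:ℝ) + δ/2) with hr
  have hur : (u:ℝ) < r := lt_min (by linarith [show (u:ℝ) < t from hult]) (by linarith)
  have hrt : r < (t:ℝ) := lt_of_le_of_lt (min_le_left _ _)
    (by linarith [show (u:ℝ) < t from hult])
  have hrmem : r ∈ unitInterval := ⟨le_trans u.2.1 hur.le, le_trans hrt.le t.2.2⟩
  set w : unitInterval := ⟨r, hrmem⟩ with hw
  have hwu : dist w u < δ := by
    rw [Subtype.dist_eq, Real.dist_eq, abs_of_pos (by exact sub_pos.2 hur)]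
    have : r ≤ (u:ℝ) + δ/2 := min_le_right _ _
    simp only [hw]
    linarith
  have hgw : g w ≠ g t := by
    intro h
    have := hδ2 w hwu
    rw [h, dist_comm] at this
    exact absurd this (lt_irrefl _)
  -- the set of points x with g x ≠ g t, intersected with (u,t), is open and contains w
  have hWopen : IsOpen ({x : unitInterval | g x ≠ g t} ∩
      (Subtype.val ⁻¹' Set.Ioo (u:ℝ) (t:ℝ))) := by
    apply IsOpen.inter
    · exact (isOpen_compl_singleton).preimage hg
    · exact isOpen_Ioo.preimage continuous_subtype_val
  have hWne : ({x : unitInterval | g x ≠ g t} ∩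
      (Subtype.val ⁻¹' Set.Ioo (u:ℝ) (t:ℝ))).Nonempty := ⟨w, hgw, hur, hrt⟩
  obtain ⟨n, hn1, hn2, hn3⟩ := hq.exists_mem_open hWopen hWne
  have hsqn : s < q n := lt_of_le_of_lt hus (Subtype.coe_lt_coe.mp hn2)
  have hqnt : q n ≤ t := (Subtype.coe_lt_coe.mp hn3).le
  have hFs : mlF g (q n) s = 0 := by
    rw [mlF, max_eq_left hsqn.le, Set.Icc_self, Set.image_singleton, Metric.diam_singleton]
  have hFt : 0 < mlF g (q n) t := by
    have hd : dist (g (q n)) (g t) ≤ mlF g (q n) t := by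
      rw [mlF, max_eq_right hqnt]
      exact Metric.dist_le_diam_of_mem (ml_bounded hg _)
        ⟨q n, ⟨le_rfl, hqnt⟩, rfl⟩ ⟨t, ⟨hqnt, le_rfl⟩, rfl⟩
    exact lt_of_lt_of_le (dist_pos.2 hn1) hd
  apply Summable.tsum_lt_tsum (i := n)
    (fun b => mul_le_mul_of_nonneg_left (mlF_mono hg _ hst) (by positivity))
  · rw [hFs, mul_zero]
    positivity
  · exact mlM_summable hg q s
  · exact mlM_summable hg q t

lemma mlM_cont : Continuous (mlM g q) := by
  rw [Metric.continuous_iff]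
  intro b ε hε
  obtain ⟨δ, hδ, hδ2⟩ := Metric.uniformContinuous_iff.mp
    (CompactSpace.uniformContinuous_of_continuous hg) (ε/3) (by positivity)
  refine ⟨δ, hδ, fun a hab => ?_⟩
  have key : ∀ s t : unitInterval, s ≤ t → dist s t < δ →
      mlM g q t - mlM g q s ≤ 2 * (ε/3) := by
    intro s t hst hd
    have hdi : Metric.diam (g '' Set.Icc s t) ≤ ε/3 := by
      apply Metric.diam_le_of_forall_dist_le (by positivity)
      rintro x ⟨u, hu, rfl⟩ y ⟨v, hv, rfl⟩
      refine (hδ2 ?_).le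
      have hu1 : (s:ℝ) ≤ u := Subtype.coe_le_coe.2 hu.1
      have hu2 : (u:ℝ) ≤ t := Subtype.coe_le_coe.2 hu.2
      have hv1 : (s:ℝ) ≤ v := Subtype.coe_le_coe.2 hv.1
      have hv2 : (v:ℝ) ≤ t := Subtype.coe_le_coe.2 hv.2
      have hst' : (s:ℝ) ≤ t := Subtype.coe_le_coe.2 hst
      rw [Subtype.dist_eq, Real.dist_eq] at hd ⊢
      rw [abs_sub_lt_iff]
      rw [abs_sub_lt_iff] at hd
      constructor <;> linarith
    have := mlM_diff_le hg q hst
    linarith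
  rcases le_total a b with h | h
  · have h1 := mlM_mono hg q h
    have h2 := key a b h hab
    rw [Real.dist_eq, abs_sub_lt_iff]
    constructor <;> linarith
  · have h1 := mlM_mono hg q h
    have h2 := key b a h (by rwa [dist_comm])
    rw [Real.dist_eq, abs_sub_lt_iff]
    constructor <;> linarith

end MLAux

/-- Monotone-light factorisation: every continuous surjection from the
unit interval onto a nontrivial Peano continuum factors as a nowhere constant
continuous surjection precomposed with a monotone continuous surjection. -/
theorem stmt_10 {X : Type*} [TopologicalSpace X] [CompactSpace X] [ConnectedSpace X]
    [LocallyConnectedSpace X] [TopologicalSpace.MetrizableSpace X] [Nontrivial X]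
    (g : unitInterval → X) (hg : Continuous g) (hsurj : Function.Surjective g) :
    ∃ (ghat : unitInterval → X) (m : unitInterval → unitInterval),
      Continuous ghat ∧ Function.Surjective ghat ∧
      (∀ a b : unitInterval, a < b → ¬ ∀ x ∈ Set.Icc a b, ghat x = ghat a) ∧
      Continuous m ∧ Monotone m ∧ Function.Surjective m ∧ g = ghat ∘ m := by
  letI : MetricSpace X := TopologicalSpace.metrizableSpaceMetric X
  obtain ⟨q, hq⟩ := TopologicalSpace.exists_dense_seq unitInterval
  set M := mlM g q with hM
  have hMcont : Continuous M := mlM_cont hg q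
  have hMmono : Monotone M := mlM_mono hg q
  have h01 : (0:unitInterval) ≤ 1 := unitInterval.nonneg'
  have hmemIcc : ∀ t : unitInterval, t ∈ Set.Icc (0:unitInterval) 1 :=
    fun t => ⟨unitInterval.nonneg', unitInterval.le_one'⟩
  have hne : ¬ ∀ u ∈ Set.Icc (0:unitInterval) 1, g u = g 1 := by
    intro h
    obtain ⟨x, y, hxy⟩ := exists_pair_ne X
    obtain ⟨tx, rfl⟩ := hsurj x
    obtain ⟨ty, rfl⟩ := hsurj y
    exact hxy ((h tx (hmemIcc tx)).trans (h ty (hmemIcc ty)).symm)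
  have hlt : M 0 < M 1 := mlM_strict hg q hq h01 hne
  set c : ℝ := M 1 - M 0 with hcdef
  have hc : 0 < c := sub_pos.2 hlt
  have hmem : ∀ t : unitInterval, (M t - M 0) / c ∈ unitInterval := by
    intro t
    constructor
    · apply div_nonneg _ hc.le
      exact sub_nonneg.2 (hMmono unitInterval.nonneg')
    · rw [div_le_one hc]
      exact sub_le_sub_right (hMmono unitInterval.le_one') _
  set m : unitInterval → unitInterval := fun t => ⟨(M t - M 0) / c, hmem t⟩ with hm
  have hmcont : Continuous m :=
    Continuous.subtype_mk ((hMcont.sub continuous_const).div_const c) _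
  have hmmono : Monotone m := by
    intro a b hab
    rw [hm, Subtype.mk_le_mk]
    gcongr
    exact hMmono hab
  -- mlM values determine m values
  have hmeq : ∀ s t : unitInterval, m s = m t ↔ M s = M t := by
    intro s t
    rw [hm, Subtype.mk_eq_mk, div_eq_div_iff hc.ne' hc.ne']
    constructor
    · intro h
      have := mul_right_cancel₀ (ne_of_gt hc) h
      linarith
    · intro h
      rw [h]
  -- well-definedness: equal m-values give equal g-values
  have hwd : ∀ s t : unitInterval, m s = m t → g s = g t := by
    have key : ∀ s t : unitInterval, s ≤ t → m s = m t → g s = g t := by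
      intro s t hst hmst
      rw [hmeq] at hmst
      have hconst : ∀ u ∈ Set.Icc s t, g u = g t := by
        by_contra hnc
        exact absurd hmst (ne_of_lt (mlM_strict hg q hq hst hnc))
      exact hconst s ⟨le_rfl, hst⟩
    intro s t hmst
    rcases le_total s t with h | h
    · exact key s t h hmst
    · exact (key t s h hmst.symm).symm
  -- surjectivity of m via intermediate value theorem
  have hmsurj : Function.Surjective m := by
    intro y
    set h : ℝ → ℝ := fun r => (M (Set.projIcc 0 1 zero_le_one r) - M 0) / c with hh
    have hhcont : Continuous h :=
      ((hMcont.comp continuous_projIcc).sub continuous_const).div_const c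
    have h0 : h 0 = 0 := by
      simp [hh, Set.projIcc_left]
    have h1 : h 1 = 1 := by
      simp only [hh, Set.projIcc_right]
      field_simp
      rfl
    have hy : (y:ℝ) ∈ Set.Icc (h 0) (h 1) := by
      rw [h0, h1]
      exact y.2
    obtain ⟨r, _, hr⟩ := intermediate_value_Icc zero_le_one hhcont.continuousOn hy
    exact ⟨Set.projIcc 0 1 zero_le_one r, Subtype.ext hr⟩
  -- define ghat via a section of m
  set sec : unitInterval → unitInterval := Function.surjInv hmsurj with hsec
  have hmsec : ∀ y, m (sec y) = y := Function.surjInv_eq hmsurj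
  set ghat : unitInterval → X := g ∘ sec with hghat
  have hcomp : ∀ t, ghat (m t) = g t := by
    intro t
    exact hwd (sec (m t)) t (hmsec (m t))
  have hfact : g = ghat ∘ m := funext fun t => (hcomp t).symm
  have hghatcont : Continuous ghat := by
    have hqm := (hmcont.isClosedMap).isQuotientMap hmcont hmsurj
    rw [hqm.continuous_iff]
    exact hfact ▸ hg
  have hghatsurj : Function.Surjective ghat := by
    intro x
    obtain ⟨t, rfl⟩ := hsurj x
    exact ⟨m t, hcomp t⟩
  refine ⟨ghat, m, hghatcont, hghatsurj, ?_, hmcont, hmmono, hmsurj, hfact⟩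
  -- nowhere constant
  intro a b hab habs
  have hta : m (sec a) = a := hmsec a
  have htb : m (sec b) = b := hmsec b
  have htab : sec a ≤ sec b := by
    by_contra hcon
    push_neg at hcon
    have := hmmono hcon.le
    rw [hta, htb] at this
    exact absurd (lt_of_lt_of_le hab this) (lt_irrefl _)
  have hgba : ghat b = ghat a := habs b ⟨hab.le, le_rfl⟩
  have hconst : ∀ u ∈ Set.Icc (sec a) (sec b), g u = g (sec b) := by
    intro u hu
    have hmu : m u ∈ Set.Icc a b := by
      constructor
      · rw [← hta]; exact hmmono hu.1
      · rw [← htb]; exact hmmono hu.2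
    have h1 : g u = ghat a := by
      rw [← hcomp u]
      exact habs (m u) hmu
    have h2 : g (sec b) = ghat a := by
      rw [← hcomp (sec b), htb]
      exact hgba
    rw [h1, h2]
  have : M (sec a) = M (sec b) := mlM_const hg q htab hconst
  rw [← hmeq, hta, htb] at this
  exact absurd hab (this ▸ lt_irrefl a)
end

section
/- Let X be a Peano continuum and suppose there exists an edge-wise Eulerian map g : S¹ → X (a continuous surjection such that for every free arc e of X and every x ∈ e the preimage g⁻¹({x}) is a singleton). Then X satisfies the even-cut condition: for every partition of ground(X) into two disjoint nonempty closed sets A and B, the set of free arcs of X whose closure meets both A and B is finite of even cardinality. -/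
open Topology Set Filter

noncomputable section

lemma homeo_Ioo {a b : ℝ} (h : a < b) : Nonempty (↥(Ioo a b) ≃ₜ ↥(Ioo (0:ℝ) 1)) := by
  have h1 : (0:ℝ) < b - a := sub_pos.2 h
  have e := ((affineHomeomorph (b-a) a h1.ne').image (Ioo (0:ℝ) 1)).symm
  have himg : affineHomeomorph (b-a) a h1.ne' '' Ioo (0:ℝ) 1 = Ioo a b := by
    rw [affineHomeomorph_image_Ioo _ _ _ _ h1]; norm_num
  rw [himg] at e
  exact ⟨e⟩

section restrict

variable {C X : Type*} [TopologicalSpace C] [TopologicalSpace X] [CompactSpace C] [T2Space X]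
  {g : C → X}

lemma image_open_of_fibers (hg : Continuous g) (hsurj : Function.Surjective g) {W : Set X}
    (hW : IsOpen W)
    (hfib : ∀ x ∈ W, ∀ s t : C, g s = x → g t = x → s = t)
    (O : Set C) (hO : IsOpen O) (hOW : O ⊆ g ⁻¹' W) : IsOpen (g '' O) := by
  have key : g '' O = W ∩ (g '' Oᶜ)ᶜ := by
    ext x
    constructor
    · rintro ⟨t, htO, rfl⟩
      refine ⟨hOW htO, ?_⟩
      rintro ⟨s, hsO, hs⟩
      exact hsO (by rw [hfib (g t) (hOW htO) s t hs rfl]; exact htO)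
    · rintro ⟨hxW, hx⟩
      obtain ⟨t, rfl⟩ := hsurj x
      refine ⟨t, ?_, rfl⟩
      by_contra htO
      exact hx ⟨t, htO, rfl⟩
  rw [key]
  exact hW.inter (hg.isClosedMap _ hO.isClosed_compl).isOpen_compl

lemma exists_restrict_homeo (hg : Continuous g) (hsurj : Function.Surjective g) {W : Set X}
    (hW : IsOpen W)
    (hfib : ∀ x ∈ W, ∀ s t : C, g s = x → g t = x → s = t) :
    ∃ h : (g ⁻¹' W) ≃ₜ W, ∀ t, (h t : X) = g t.val := by
  set f : (g ⁻¹' W) → W := fun t => ⟨g t.val, t.2⟩ with hf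
  have hcont : Continuous f := (hg.comp continuous_subtype_val).subtype_mk _
  have hbij : Function.Bijective f := by
    constructor
    · rintro ⟨s, hs⟩ ⟨t, ht⟩ hst
      have : g s = g t := congrArg Subtype.val hst
      exact Subtype.ext (hfib (g t) ht s t this rfl)
    · rintro ⟨x, hx⟩
      obtain ⟨t, rfl⟩ := hsurj x
      exact ⟨⟨t, hx⟩, rfl⟩
  have hopen : IsOpenMap f := by
    intro V hV
    rcases isOpen_induced_iff.1 hV with ⟨O, hO, rfl⟩
    have h1 : IsOpen (g '' (O ∩ g ⁻¹' W)) :=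
      image_open_of_fibers hg hsurj hW hfib _ (hO.inter (hW.preimage hg)) inter_subset_right
    have h2 : f '' (Subtype.val ⁻¹' O) = Subtype.val ⁻¹' (g '' (O ∩ g ⁻¹' W)) := by
      ext x
      constructor
      · rintro ⟨t, htO, rfl⟩
        exact ⟨t.val, ⟨htO, t.2⟩, rfl⟩
      · rintro ⟨t, ⟨htO, htW⟩, hgt⟩
        exact ⟨⟨t, htW⟩, htO, Subtype.ext hgt⟩
    rw [h2]
    exact h1.preimage continuous_subtype_val
  exact ⟨Equiv.toHomeomorphOfContinuousOpen (Equiv.ofBijective f hbij) hcont hopen,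
    fun t => rfl⟩

end restrict



lemma two_pi_pos' : (0:ℝ) < 2 * Real.pi := by positivity

lemma exp_rep (θ₀ : ℝ) (x : Circle) : ∃ t ∈ Ico θ₀ (θ₀ + 2*Real.pi), Circle.exp t = x := by
  set m := toIcoDiv two_pi_pos' θ₀ (Complex.arg x) with hm
  refine ⟨toIcoMod two_pi_pos' θ₀ (Complex.arg x), toIcoMod_mem_Ico _ _ _, ?_⟩
  have h : toIcoMod two_pi_pos' θ₀ (Complex.arg x) = Complex.arg x + ((-m : ℤ):ℝ) * (2*Real.pi) := by
    have h0 := toIcoMod_sub_self two_pi_pos' θ₀ (Complex.arg x)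
    rw [zsmul_eq_mul] at h0
    push_cast at h0 ⊢
    linarith
  have h2 : Circle.exp (Complex.arg x + ((-m : ℤ):ℝ) * (2*Real.pi)) = Circle.exp (Complex.arg x) :=
    Circle.exp_eq_exp.2 ⟨-m, by push_cast; ring⟩
  rw [h, h2, Circle.exp_arg]

lemma exp_eq_on_Icc {θ₀ s t : ℝ} (hs : s ∈ Icc θ₀ (θ₀ + 2*Real.pi))
    (ht : t ∈ Icc θ₀ (θ₀ + 2*Real.pi)) (h : Circle.exp s = Circle.exp t) (hne : s ≠ t) :
    (s = θ₀ ∧ t = θ₀ + 2*Real.pi) ∨ (t = θ₀ ∧ s = θ₀ + 2*Real.pi) := by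
  obtain ⟨m, hm⟩ := Circle.exp_eq_exp.1 h
  have hpi := Real.pi_pos
  have hcases : m = 0 ∨ 1 ≤ m ∨ m ≤ -1 := by omega
  rcases hcases with h0 | h1 | h2
  · rw [h0] at hm; push_cast at hm; exact absurd (by linarith) hne
  · have : (1:ℝ) ≤ (m:ℝ) := by exact_mod_cast h1
    have hst : s = t + m * (2*Real.pi) := hm
    right
    constructor <;> nlinarith [hs.1, hs.2, ht.1, ht.2]
  · have : (m:ℝ) ≤ -1 := by exact_mod_cast h2
    have hst : s = t + m * (2*Real.pi) := hm
    left
    constructor <;> nlinarith [hs.1, hs.2, ht.1, ht.2]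

lemma exp_injOn_Ioo (θ₀ : ℝ) : InjOn Circle.exp (Ioo θ₀ (θ₀ + 2*Real.pi)) := by
  intro s hs t ht h
  by_contra hne
  rcases exp_eq_on_Icc (Ioo_subset_Icc_self hs) (Ioo_subset_Icc_self ht) h hne with ⟨h1,_⟩|⟨h1,_⟩
  · exact hs.1.ne' h1
  · exact ht.1.ne' h1

lemma exp_image_open (θ₀ : ℝ) {O : Set ℝ} (hO : IsOpen O)
    (hsub : O ⊆ Ioo θ₀ (θ₀ + 2*Real.pi)) : IsOpen (Circle.exp '' O) := by
  have key : Circle.exp '' O = (Circle.exp '' (Icc θ₀ (θ₀ + 2*Real.pi) \ O))ᶜ := by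
    ext x
    simp only [mem_image, mem_compl_iff, mem_diff, not_exists]
    constructor
    · rintro ⟨t, htO, rfl⟩ s ⟨⟨hsI, hsO⟩, hst⟩
      rcases eq_or_ne s t with rfl | hne
      · exact hsO htO
      · rcases exp_eq_on_Icc hsI (Ioo_subset_Icc_self (hsub htO)) hst hne with ⟨_, h2⟩ | ⟨h1, _⟩
        · exact (hsub htO).2.ne h2
        · exact (hsub htO).1.ne' h1
    · intro hx
      obtain ⟨t, htI, rfl⟩ := exp_rep θ₀ x
      by_cases htO : t ∈ O
      · exact ⟨t, htO, rfl⟩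
      · exact absurd ⟨⟨Ico_subset_Icc_self htI, htO⟩, rfl⟩ (hx t)
  rw [key]
  exact (((isCompact_Icc).diff hO).image Circle.exp.continuous).isClosed.isOpen_compl

lemma open_preconn_eq_Ioo {O : Set ℝ} (hO : IsOpen O) (hc : IsPreconnected O) (hne : O.Nonempty)
    {c d : ℝ} (hsub : O ⊆ Ioo c d) :
    ∃ a b, c ≤ a ∧ a < b ∧ b ≤ d ∧ O = Ioo a b := by
  have hbdd_below : BddBelow O := ⟨c, fun x hx => (hsub hx).1.le⟩
  have hbdd_above : BddAbove O := ⟨d, fun x hx => (hsub hx).2.le⟩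
  set a := sInf O with ha
  set b := sSup O with hb
  obtain ⟨x0, hx0⟩ := hne
  have hca : c ≤ a := le_csInf ⟨x0, hx0⟩ (fun x hx => (hsub hx).1.le)
  have hbd : b ≤ d := csSup_le ⟨x0, hx0⟩ (fun x hx => (hsub hx).2.le)
  have hanotin : a ∉ O := by
    intro haO
    obtain ⟨ε, hε, hball⟩ := Metric.isOpen_iff.1 hO a haO
    have h2 : a - ε/2 ∈ O := hball (by
      simp only [Metric.mem_ball, Real.dist_eq]
      rw [abs_of_nonpos (by linarith)]
      linarith)
    have := csInf_le hbdd_below h2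
    linarith
  have hbnotin : b ∉ O := by
    intro hbO
    obtain ⟨ε, hε, hball⟩ := Metric.isOpen_iff.1 hO b hbO
    have h2 : b + ε/2 ∈ O := hball (by
      simp only [Metric.mem_ball, Real.dist_eq]
      rw [abs_of_nonneg (by linarith)]
      linarith)
    have := le_csSup hbdd_above h2
    linarith
  have hOsub : O ⊆ Ioo a b := by
    intro x hx
    refine ⟨(csInf_le hbdd_below hx).lt_of_ne ?_, (le_csSup hbdd_above hx).lt_of_ne ?_⟩
    · intro h; exact hanotin (show sInf O ∈ O by rw [h]; exact hx)
    · intro h; exact hbnotin (show sSup O ∈ O by rw [← h]; exact hx)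
  have hab : a < b := by
    have h1 := hOsub hx0
    exact h1.1.trans h1.2
  refine ⟨a, b, hca, hab, hbd, Subset.antisymm hOsub ?_⟩
  intro x hx
  obtain ⟨y, hyO, hyx⟩ := exists_lt_of_csInf_lt ⟨x0, hx0⟩ hx.1
  obtain ⟨z, hzO, hxz⟩ := exists_lt_of_lt_csSup ⟨x0, hx0⟩ hx.2
  exact hc.Icc_subset hyO hzO ⟨hyx.le, hxz.le⟩

lemma arc_structure {U : Set Circle} (hU : IsOpen U) (hUc : IsPreconnected U) (hne : U.Nonempty)
    {θ₀ : ℝ} (hx₀ : Circle.exp θ₀ ∉ U) :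
    ∃ a b : ℝ, θ₀ ≤ a ∧ a < b ∧ b ≤ θ₀ + 2*Real.pi ∧
      U = Circle.exp '' Ioo a b ∧
      (∀ t ∈ Icc θ₀ (θ₀ + 2*Real.pi), Circle.exp t ∈ U → t ∈ Ioo a b) ∧
      closure U = Circle.exp '' Icc a b ∧
      Nonempty (↥U ≃ₜ ↥(Ioo (0:ℝ) 1)) := by
  have hpi := Real.pi_pos
  set V : Set ℝ := Circle.exp ⁻¹' U ∩ Ioo θ₀ (θ₀ + 2*Real.pi) with hV
  have hVopen : IsOpen V := (hU.preimage Circle.exp.continuous).inter isOpen_Ioo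
  have hVsub : V ⊆ Ioo θ₀ (θ₀ + 2*Real.pi) := inter_subset_right
  have himg : Circle.exp '' V = U := by
    apply Subset.antisymm
    · rintro x ⟨t, ⟨htU, _⟩, rfl⟩; exact htU
    · intro x hx
      obtain ⟨t, htI, rfl⟩ := exp_rep θ₀ x
      have ht0 : t ≠ θ₀ := by rintro rfl; exact hx₀ hx
      exact ⟨t, ⟨hx, ⟨htI.1.lt_of_ne (Ne.symm ht0), htI.2⟩⟩, rfl⟩
  have hVne : V.Nonempty := by
    obtain ⟨x, hx⟩ := hne
    rw [← himg] at hx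
    obtain ⟨t, ht, _⟩ := hx
    exact ⟨t, ht⟩
  have hVconn : IsPreconnected V := by
    intro u v hu hv hcover h1 h2
    obtain ⟨p, hpV, hpu⟩ := h1
    obtain ⟨q, hqV, hqv⟩ := h2
    have hu' : IsOpen (Circle.exp '' (u ∩ V)) :=
      exp_image_open θ₀ (hu.inter hVopen) (inter_subset_right.trans hVsub)
    have hv' : IsOpen (Circle.exp '' (v ∩ V)) :=
      exp_image_open θ₀ (hv.inter hVopen) (inter_subset_right.trans hVsub)
    have hcov : U ⊆ Circle.exp '' (u ∩ V) ∪ Circle.exp '' (v ∩ V) := by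
      intro x hx
      rw [← himg] at hx
      obtain ⟨t, htV, rfl⟩ := hx
      rcases hcover htV with h | h
      · exact Or.inl ⟨t, ⟨h, htV⟩, rfl⟩
      · exact Or.inr ⟨t, ⟨h, htV⟩, rfl⟩
    have hU1 : (U ∩ Circle.exp '' (u ∩ V)).Nonempty :=
      ⟨Circle.exp p, by rw [← himg]; exact ⟨p, hpV, rfl⟩, ⟨p, ⟨hpu, hpV⟩, rfl⟩⟩
    have hU2 : (U ∩ Circle.exp '' (v ∩ V)).Nonempty :=
      ⟨Circle.exp q, by rw [← himg]; exact ⟨q, hqV, rfl⟩, ⟨q, ⟨hqv, hqV⟩, rfl⟩⟩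
    obtain ⟨x, _, ⟨t1, ht1, hxt1⟩, ⟨t2, ht2, hxt2⟩⟩ := hUc _ _ hu' hv' hcov hU1 hU2
    have : t1 = t2 := exp_injOn_Ioo θ₀ (hVsub ht1.2) (hVsub ht2.2) (hxt1.trans hxt2.symm)
    exact ⟨t1, ht1.2, ht1.1, this ▸ ht2.1⟩
  obtain ⟨a, b, hθa, hab, hbθ, hVIoo⟩ := open_preconn_eq_Ioo hVopen hVconn hVne hVsub
  have hIooSub : Ioo a b ⊆ Ioo θ₀ (θ₀ + 2*Real.pi) := fun x hx =>
    ⟨hθa.trans_lt hx.1, hx.2.trans_le hbθ⟩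
  have hUeq : U = Circle.exp '' Ioo a b := by rw [← himg, hVIoo]
  have hchar : ∀ t ∈ Icc θ₀ (θ₀ + 2*Real.pi), Circle.exp t ∈ U → t ∈ Ioo a b := by
    intro t htI htU
    rcases eq_or_ne t θ₀ with rfl | h0
    · exact absurd htU hx₀
    rcases eq_or_ne t (θ₀ + 2*Real.pi) with rfl | h1
    · rw [show Circle.exp (θ₀ + 2*Real.pi) = Circle.exp θ₀ from Circle.periodic_exp θ₀] at htU
      exact absurd htU hx₀
    have : t ∈ V := ⟨htU, ⟨htI.1.lt_of_ne (Ne.symm h0), htI.2.lt_of_ne h1⟩⟩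
    rwa [hVIoo] at this
  have hclos : closure U = Circle.exp '' Icc a b := by
    apply Subset.antisymm
    · exact closure_minimal (by rw [hUeq]; exact image_mono Ioo_subset_Icc_self)
        ((isCompact_Icc.image Circle.exp.continuous).isClosed)
    · rw [← closure_Ioo hab.ne, hUeq]
      exact (image_closure_subset_closure_image Circle.exp.continuous)
  -- homeomorphism
  have hmem : ∀ t : ℝ, t ∈ Ioo a b → Circle.exp t ∈ U := by
    intro t ht; rw [hUeq]; exact ⟨t, ht, rfl⟩
  set φ : ↥(Ioo a b) → ↥U := fun t => ⟨Circle.exp t.val, hmem t.val t.2⟩ with hφ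
  have hφcont : Continuous φ := (Circle.exp.continuous.comp continuous_subtype_val).subtype_mk _
  have hφbij : Function.Bijective φ := by
    constructor
    · rintro ⟨s, hs⟩ ⟨t, ht⟩ hst
      exact Subtype.ext (exp_injOn_Ioo θ₀ (hIooSub hs) (hIooSub ht)
        (congrArg Subtype.val hst))
    · rintro ⟨x, hx⟩
      rw [hUeq] at hx
      obtain ⟨t, ht, rfl⟩ := hx
      exact ⟨⟨t, ht⟩, rfl⟩
  have hφopen : IsOpenMap φ := by
    intro V' hV'
    rcases isOpen_induced_iff.1 hV' with ⟨O, hO, rfl⟩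
    have h1 : IsOpen (Circle.exp '' (O ∩ Ioo a b)) :=
      exp_image_open θ₀ (hO.inter isOpen_Ioo) (inter_subset_right.trans hIooSub)
    have h2 : φ '' (Subtype.val ⁻¹' O) = Subtype.val ⁻¹' (Circle.exp '' (O ∩ Ioo a b)) := by
      ext x
      constructor
      · rintro ⟨t, htO, rfl⟩; exact ⟨t.val, ⟨htO, t.2⟩, rfl⟩
      · rintro ⟨t, ⟨htO, htI⟩, hgt⟩
        exact ⟨⟨t, htI⟩, htO, Subtype.ext hgt⟩
    rw [h2]
    exact h1.preimage continuous_subtype_val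
  have hhomeo : ↥(Ioo a b) ≃ₜ ↥U :=
    Equiv.toHomeomorphOfContinuousOpen (Equiv.ofBijective φ hφbij) hφcont hφopen
  obtain ⟨e01⟩ := homeo_Ioo hab
  exact ⟨a, b, hθa, hab, hbθ, hUeq, hchar, hclos, ⟨hhomeo.symm.trans e01⟩⟩

/-! ### Basic properties of sets homeomorphic to the interval -/

lemma nonempty_of_homeo_Ioo {Y : Type*} [TopologicalSpace Y] {s : Set Y}
    (h : Nonempty (↥s ≃ₜ ↥(Ioo (0:ℝ) 1))) : s.Nonempty := by
  obtain ⟨e⟩ := h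
  have : Nonempty ↥(Ioo (0:ℝ) 1) := ⟨⟨1/2, by norm_num⟩⟩
  obtain ⟨t⟩ := this
  exact ⟨(e.symm t).val, (e.symm t).2⟩

lemma preconn_of_homeo_Ioo {Y : Type*} [TopologicalSpace Y] {s : Set Y}
    (h : Nonempty (↥s ≃ₜ ↥(Ioo (0:ℝ) 1))) : IsPreconnected s := by
  obtain ⟨e⟩ := h
  have hpc : PreconnectedSpace ↥(Ioo (0:ℝ) 1) :=
    Subtype.preconnectedSpace (isConnected_Ioo zero_lt_one).isPreconnected
  have h1 : IsPreconnected (univ : Set ↥(Ioo (0:ℝ) 1)) := isPreconnected_univ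
  have h2 := h1.image (Subtype.val ∘ e.symm)
    ((continuous_subtype_val.comp e.symm.continuous).continuousOn)
  have h3 : (Subtype.val ∘ e.symm) '' univ = s := by
    rw [image_univ]
    ext x
    constructor
    · rintro ⟨y, rfl⟩; exact (e.symm y).2
    · intro hx; exact ⟨e ⟨x, hx⟩, by simp⟩
  rwa [h3] at h2

lemma freeArc_nonempty {X : Type*} [TopologicalSpace X] {e : Set X} (he : IsFreeArc e) :
    e.Nonempty := nonempty_of_homeo_Ioo he.2.1

lemma freeArc_not_closed {X : Type*} [TopologicalSpace X] [CompactSpace X] [ConnectedSpace X]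
    {e : Set X} (he : IsFreeArc e) : ¬ IsClosed e := by
  intro hcl
  have huniv : e = univ := IsClopen.eq_univ ⟨hcl, he.1⟩ (freeArc_nonempty he)
  have hcs : CompactSpace ↥e := by
    rw [← isCompact_iff_compactSpace]
    rw [huniv]; exact isCompact_univ
  obtain ⟨h⟩ := he.2.1
  have : CompactSpace ↥(Ioo (0:ℝ) 1) := h.compactSpace
  have hIoo : IsCompact (Ioo (0:ℝ) 1) := isCompact_iff_compactSpace.2 this
  have hcl2 := hIoo.isClosed.closure_eq
  rw [closure_Ioo (by norm_num : (0:ℝ) ≠ 1)] at hcl2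
  have h0 : (0:ℝ) ∈ Icc (0:ℝ) 1 := by norm_num
  rw [hcl2] at h0
  exact absurd h0.1 (lt_irrefl 0)

/-! ### Structure of preimages of free arcs under an Eulerian map -/

section eulerian

variable {X : Type*} [TopologicalSpace X] [CompactSpace X] [T2Space X] [ConnectedSpace X]
  {g : Circle → X}

set_option linter.unusedSectionVars false

lemma fib_unique (hE : EdgewiseEulerian g) {e : Set X} (he : IsFreeArc e) :
    ∀ x ∈ e, ∀ s t : Circle, g s = x → g t = x → s = t := by
  intro x hx s t hs ht
  obtain ⟨t0, ht0⟩ := hE e he x hx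
  have h1 : s ∈ g ⁻¹' {x} := hs
  have h2 : t ∈ g ⁻¹' {x} := ht
  rw [ht0] at h1 h2
  rw [h1, h2]

lemma arcData (hg : Continuous g) (hsurj : Function.Surjective g)
    (hE : EdgewiseEulerian g) {θ₀ : ℝ} (hθ₀ : g (Circle.exp θ₀) ∈ ground X)
    {e : Set X} (he : IsFreeArc e) :
    ∃ a b : ℝ, θ₀ ≤ a ∧ a < b ∧ b ≤ θ₀ + 2*Real.pi ∧
      g ⁻¹' e = Circle.exp '' Ioo a b ∧
      (∀ t ∈ Icc θ₀ (θ₀ + 2*Real.pi), g (Circle.exp t) ∈ e → t ∈ Ioo a b) ∧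
      closure e = (fun t => g (Circle.exp t)) '' Icc a b ∧
      closure e = e ∪ {g (Circle.exp a), g (Circle.exp b)} ∧
      g (Circle.exp a) ∉ e ∧ g (Circle.exp b) ∉ e := by
  classical
  have hfib := fib_unique hE he
  set U : Set Circle := g ⁻¹' e with hU
  have hUopen : IsOpen U := he.1.preimage hg
  obtain ⟨hom, hhom⟩ := exists_restrict_homeo hg hsurj he.1 hfib
  have hUhomeo : Nonempty (↥U ≃ₜ ↥(Ioo (0:ℝ) 1)) := by
    obtain ⟨h2⟩ := he.2.1
    exact ⟨hom.trans h2⟩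
  have hUne : U.Nonempty := nonempty_of_homeo_Ioo hUhomeo
  have hUconn : IsPreconnected U := preconn_of_homeo_Ioo hUhomeo
  have hx₀ : Circle.exp θ₀ ∉ U := fun h => hθ₀ e he h
  obtain ⟨a, b, hθa, hab, hbθ, hUeq, hchar, hclosU, _⟩ :=
    arc_structure hUopen hUconn hUne hx₀
  have haIcc : a ∈ Icc θ₀ (θ₀ + 2*Real.pi) := ⟨hθa, hab.le.trans hbθ⟩
  have hbIcc : b ∈ Icc θ₀ (θ₀ + 2*Real.pi) := ⟨hθa.trans hab.le, hbθ⟩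
  have himgU : g '' U = e := Set.image_preimage_eq e hsurj
  have hgclos : g '' (Circle.exp '' Icc a b) = e ∪ {g (Circle.exp a), g (Circle.exp b)} := by
    apply Subset.antisymm
    · rintro x ⟨y, ⟨t, htI, rfl⟩, rfl⟩
      rcases eq_or_ne t a with rfl | hta
      · right; left; rfl
      rcases eq_or_ne t b with rfl | htb
      · right; right; rfl
      have : t ∈ Ioo a b := ⟨htI.1.lt_of_ne (Ne.symm hta), htI.2.lt_of_ne htb⟩
      left
      rw [← himgU]
      exact ⟨Circle.exp t, by rw [hUeq]; exact ⟨t, this, rfl⟩, rfl⟩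
    · rintro x (hx | hx)
      · rw [← himgU] at hx
        obtain ⟨y, hy, rfl⟩ := hx
        rw [hUeq] at hy
        obtain ⟨t, ht, rfl⟩ := hy
        exact ⟨Circle.exp t, ⟨t, Ioo_subset_Icc_self ht, rfl⟩, rfl⟩
      · rcases hx with rfl | hx
        · exact ⟨Circle.exp a, ⟨a, left_mem_Icc.2 hab.le, rfl⟩, rfl⟩
        · rw [mem_singleton_iff] at hx
          rw [hx]
          exact ⟨Circle.exp b, ⟨b, right_mem_Icc.2 hab.le, rfl⟩, rfl⟩
  have hcls : closure e = e ∪ {g (Circle.exp a), g (Circle.exp b)} := by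
    apply Subset.antisymm
    · have hcomp : IsCompact (Circle.exp '' Icc a b) :=
        isCompact_Icc.image Circle.exp.continuous
      have : IsClosed (g '' (Circle.exp '' Icc a b)) := (hcomp.image hg).isClosed
      rw [← hgclos]
      apply closure_minimal _ this
      intro x hx
      rw [← himgU] at hx
      obtain ⟨y, hy, rfl⟩ := hx
      rw [hUeq] at hy
      obtain ⟨t, ht, rfl⟩ := hy
      exact ⟨Circle.exp t, ⟨t, Ioo_subset_Icc_self ht, rfl⟩, rfl⟩
    · rw [← hgclos, ← hclosU]
      have h1 : g '' closure U ⊆ closure (g '' U) := image_closure_subset_closure_image hg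
      rw [himgU] at h1
      exact h1
  have hclsIcc : closure e = (fun t => g (Circle.exp t)) '' Icc a b := by
    rw [hcls, ← hgclos, image_image]
  have hnota : g (Circle.exp a) ∉ e := by
    intro h
    have : Circle.exp a ∈ U := h
    rw [hUeq] at this
    obtain ⟨t, ht, hexp⟩ := this
    rcases eq_or_ne t a with rfl | hta
    · exact absurd ht.1 (lt_irrefl t)
    have htIcc : t ∈ Icc θ₀ (θ₀ + 2*Real.pi) :=
      ⟨hθa.trans ht.1.le, ht.2.le.trans hbθ⟩
    rcases exp_eq_on_Icc htIcc haIcc hexp hta with ⟨h1, _⟩ | ⟨_, h2⟩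
    · exact absurd h1 (ne_of_gt (hθa.trans_lt ht.1))
    · exact absurd h2 (ne_of_lt (ht.2.trans_le hbθ))
  have hnotb : g (Circle.exp b) ∉ e := by
    intro h
    have : Circle.exp b ∈ U := h
    rw [hUeq] at this
    obtain ⟨t, ht, hexp⟩ := this
    rcases eq_or_ne t b with rfl | htb
    · exact absurd ht.2 (lt_irrefl t)
    have htIcc : t ∈ Icc θ₀ (θ₀ + 2*Real.pi) :=
      ⟨hθa.trans ht.1.le, ht.2.le.trans hbθ⟩
    rcases exp_eq_on_Icc htIcc hbIcc hexp htb with ⟨h1, _⟩ | ⟨h1, _⟩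
    · exact absurd h1 (ne_of_gt (hθa.trans_lt ht.1))
    · exact absurd h1 (ne_of_gt (hθa.trans_lt hab))
  exact ⟨a, b, hθa, hab, hbθ, hUeq, fun t htI hte => hchar t htI hte, hclsIcc, hcls, hnota, hnotb⟩

end eulerian

section eulerian2

variable {X : Type*} [TopologicalSpace X] [CompactSpace X] [T2Space X] [ConnectedSpace X]
  {g : Circle → X}

set_option linter.unusedSectionVars false

lemma freeArc_disjoint (hg : Continuous g) (hsurj : Function.Surjective g)
    (hE : EdgewiseEulerian g) (hz : (ground X).Nonempty)
    {e e' : Set X} (he : IsFreeArc e) (he' : IsFreeArc e') (hne : e ≠ e') :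
    e ∩ e' = ∅ := by
  by_contra hint
  obtain ⟨x, hxe, hxe'⟩ := nonempty_iff_ne_empty.2 hint
  obtain ⟨z, hzg⟩ := hz
  obtain ⟨tz, rfl⟩ := hsurj z
  obtain ⟨θz, _, hexpz⟩ := exp_rep 0 tz
  set W : Set X := e ∪ e' with hW
  have hWopen : IsOpen W := he.1.union he'.1
  have hfibW : ∀ y ∈ W, ∀ s t : Circle, g s = y → g t = y → s = t := by
    rintro y (hy | hy) s t hs ht
    · exact fib_unique hE he y hy s t hs ht
    · exact fib_unique hE he' y hy s t hs ht
  obtain ⟨hom, _⟩ := exists_restrict_homeo hg hsurj hWopen hfibW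
  obtain ⟨t, ht⟩ := hsurj x
  have hpre : g ⁻¹' W = g ⁻¹' e ∪ g ⁻¹' e' := rfl
  have hconn : IsPreconnected (g ⁻¹' W) := by
    rw [hpre]
    have h1 : IsPreconnected (g ⁻¹' e) := by
      obtain ⟨hm, _⟩ := exists_restrict_homeo hg hsurj he.1 (fib_unique hE he)
      obtain ⟨h2⟩ := he.2.1
      exact preconn_of_homeo_Ioo ⟨hm.trans h2⟩
    have h2 : IsPreconnected (g ⁻¹' e') := by
      obtain ⟨hm, _⟩ := exists_restrict_homeo hg hsurj he'.1 (fib_unique hE he')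
      obtain ⟨h2⟩ := he'.2.1
      exact preconn_of_homeo_Ioo ⟨hm.trans h2⟩
    exact IsPreconnected.union t (by rw [mem_preimage, ht]; exact hxe)
      (by rw [mem_preimage, ht]; exact hxe') h1 h2
  have hWne : (g ⁻¹' W).Nonempty := ⟨t, by rw [mem_preimage, ht]; exact Or.inl hxe⟩
  have hzout : Circle.exp θz ∉ g ⁻¹' W := by
    rw [mem_preimage, hexpz]
    rintro (h | h)
    · exact hzg e he h
    · exact hzg e' he' h
  obtain ⟨a, b, _, _, _, _, _, _, ⟨hIoo⟩⟩ :=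
    arc_structure (hWopen.preimage hg) hconn hWne hzout
  have hWIoo : Nonempty (↥W ≃ₜ ↥(Ioo (0:ℝ) 1)) := ⟨hom.symm.trans hIoo⟩
  have h1 : W = e := he.2.2 W hWopen hWIoo subset_union_left
  have h2 : W = e' := he'.2.2 W hWopen hWIoo subset_union_right
  exact hne (h1 ▸ h2 ▸ rfl)

lemma freeArc_boundary (hg : Continuous g) (hsurj : Function.Surjective g)
    (hE : EdgewiseEulerian g) (hz : (ground X).Nonempty)
    {e : Set X} (he : IsFreeArc e) :
    (closure e \ e).Nonempty ∧ closure e \ e ⊆ ground X := by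
  constructor
  · rw [nonempty_iff_ne_empty]
    intro hsub
    have : closure e ⊆ e := fun x hx => by
      by_contra hxe
      exact absurd (mem_diff x |>.2 ⟨hx, hxe⟩) (by rw [hsub]; exact notMem_empty x)
    have : IsClosed e := by
      have heq : closure e = e := Subset.antisymm this subset_closure
      rw [← heq]; exact isClosed_closure
    exact freeArc_not_closed he this
  · rintro p ⟨hp, hpe⟩
    intro e' he' hpe'
    have hne : e ≠ e' := fun h => hpe (h ▸ hpe')
    have hdisj := freeArc_disjoint hg hsurj hE hz he he' hne
    obtain ⟨y, hy1, hy2⟩ := mem_closure_iff.1 hp e' he'.1 hpe'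
    exact absurd (mem_inter hy2 hy1) (by rw [hdisj]; exact notMem_empty y)

end eulerian2

/-! ### Finiteness of large free arcs -/

section metric

variable {X : Type*} [MetricSpace X] [CompactSpace X] [ConnectedSpace X] {g : Circle → X}

set_option linter.unusedSectionVars false

lemma intervals_disjoint (hg : Continuous g) (hsurj : Function.Surjective g)
    (hE : EdgewiseEulerian g) {θ₀ : ℝ} (hθ₀ : g (Circle.exp θ₀) ∈ ground X)
    {e e' : Set X} (he : IsFreeArc e) (he' : IsFreeArc e') (hne : e ≠ e')
    {a b a' b' : ℝ} (hUeq : g ⁻¹' e = Circle.exp '' Ioo a b)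
    (hUeq' : g ⁻¹' e' = Circle.exp '' Ioo a' b') :
    Ioo a b ∩ Ioo a' b' = ∅ := by
  rw [eq_empty_iff_forall_notMem]
  rintro t ⟨ht, ht'⟩
  have h1 : Circle.exp t ∈ g ⁻¹' e := by rw [hUeq]; exact ⟨t, ht, rfl⟩
  have h2 : Circle.exp t ∈ g ⁻¹' e' := by rw [hUeq']; exact ⟨t, ht', rfl⟩
  have hdisj := freeArc_disjoint hg hsurj hE ⟨_, hθ₀⟩ he he' hne
  exact absurd (mem_inter h1 h2) (by
    rw [show g ⁻¹' e ∩ g ⁻¹' e' = g ⁻¹' (e ∩ e') from rfl, hdisj]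
    simp)

lemma finite_big_arcs (hg : Continuous g) (hsurj : Function.Surjective g)
    (hE : EdgewiseEulerian g) {θ₀ : ℝ} (hθ₀ : g (Circle.exp θ₀) ∈ ground X)
    {δ : ℝ} (hδ : 0 < δ) :
    {e : Set X | IsFreeArc e ∧ δ ≤ Metric.diam (closure e)}.Finite := by
  classical
  have hpi := Real.pi_pos
  -- choose interval data for every free arc
  have hst : ∀ e : Set X, IsFreeArc e → ∃ a b : ℝ, θ₀ ≤ a ∧ a < b ∧ b ≤ θ₀ + 2*Real.pi ∧
      g ⁻¹' e = Circle.exp '' Ioo a b ∧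
      (∀ t ∈ Icc θ₀ (θ₀ + 2*Real.pi), g (Circle.exp t) ∈ e → t ∈ Ioo a b) ∧
      closure e = (fun t => g (Circle.exp t)) '' Icc a b ∧
      closure e = e ∪ {g (Circle.exp a), g (Circle.exp b)} ∧
      g (Circle.exp a) ∉ e ∧ g (Circle.exp b) ∉ e :=
    fun e he => arcData hg hsurj hE hθ₀ he
  choose! a b h1 h2 h3 h4 h5 h6 h7 using hst
  -- uniform continuity of g ∘ exp on the fundamental interval
  have hcont : Continuous (fun t : ℝ => g (Circle.exp t)) := hg.comp Circle.exp.continuous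
  have hUC := isCompact_Icc.uniformContinuousOn_of_continuous
    (s := Icc θ₀ (θ₀ + 2*Real.pi)) hcont.continuousOn
  rw [Metric.uniformContinuousOn_iff] at hUC
  obtain ⟨ε, hε, hUCε⟩ := hUC (δ/2) (by linarith)
  -- every big arc has interval length ≥ ε
  have hbig : ∀ e : Set X, IsFreeArc e → δ ≤ Metric.diam (closure e) → ε ≤ b e - a e := by
    intro e he hdiam
    by_contra hlen
    push_neg at hlen
    have hIccsub : Icc (a e) (b e) ⊆ Icc θ₀ (θ₀ + 2*Real.pi) :=
      Icc_subset_Icc (h1 e he) (h3 e he)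
    have hdle : Metric.diam (closure e) ≤ δ/2 := by
      rw [h6 e he]
      apply Metric.diam_le_of_forall_dist_le (by linarith)
      rintro x ⟨s, hs, rfl⟩ y ⟨t, ht, rfl⟩
      have hst : dist s t < ε := by
        rw [Real.dist_eq]
        have := hs.1; have := hs.2; have := ht.1; have := ht.2
        rw [abs_lt]; constructor <;> linarith
      exact (hUCε s (hIccsub hs) t (hIccsub ht) hst).le
    linarith
  -- left endpoints of big arcs are ε-separated
  set S := {e : Set X | IsFreeArc e ∧ δ ≤ Metric.diam (closure e)} with hS
  have hsep : ∀ e ∈ S, ∀ e' ∈ S, e ≠ e' → ε ≤ |a e - a e'| := by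
    rintro e ⟨he, hde⟩ e' ⟨he', hde'⟩ hne
    have hdisj := intervals_disjoint hg hsurj hE hθ₀ he he' hne (h4 e he) (h4 e' he')
    have hL := hbig e he hde
    have hL' := hbig e' he' hde'
    have hab := h2 e he
    have hab' := h2 e' he'
    rcases le_or_gt (a e) (a e') with hle | hlt
    · have hba : b e ≤ a e' := by
        by_contra hc
        push_neg at hc
        have hm : a e' < min (b e) (b e') := lt_min hc hab'
        have ht1 : a e' < (a e' + min (b e) (b e'))/2 := by linarith
        have ht2 : (a e' + min (b e) (b e'))/2 < min (b e) (b e') := by linarith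
        have hmem : (a e' + min (b e) (b e'))/2 ∈ Ioo (a e) (b e) ∩ Ioo (a e') (b e') :=
          ⟨⟨hle.trans_lt ht1, ht2.trans_le (min_le_left _ _)⟩,
           ⟨ht1, ht2.trans_le (min_le_right _ _)⟩⟩
        rw [hdisj] at hmem
        exact hmem
      rw [abs_sub_comm, abs_of_nonneg (by linarith)]
      linarith
    · have hba : b e' ≤ a e := by
        by_contra hc
        push_neg at hc
        have hm : a e < min (b e) (b e') := lt_min hab hc
        have ht1 : a e < (a e + min (b e) (b e'))/2 := by linarith
        have ht2 : (a e + min (b e) (b e'))/2 < min (b e) (b e') := by linarith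
        have hmem : (a e + min (b e) (b e'))/2 ∈ Ioo (a e) (b e) ∩ Ioo (a e') (b e') :=
          ⟨⟨ht1, ht2.trans_le (min_le_left _ _)⟩,
           ⟨hlt.trans ht1, ht2.trans_le (min_le_right _ _)⟩⟩
        rw [hdisj] at hmem
        exact hmem
      rw [abs_of_nonneg (by linarith)]
      linarith
  -- finiteness via an injection into a finite set of integers
  have key : ∀ u v : ℝ, u/ε - v/ε < 1 → u - v < ε := by
    intro u v h
    have h2 := mul_lt_mul_of_pos_right h hε
    rw [sub_mul, div_mul_cancel₀ _ hε.ne', div_mul_cancel₀ _ hε.ne', one_mul] at h2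
    exact h2
  have hinj : InjOn (fun e => ⌊(a e - θ₀)/ε⌋) S := by
    rintro e heS e' heS' hfl
    by_contra hne
    have hsep' := hsep e heS e' heS' hne
    have hfl1 : ⌊(a e - θ₀)/ε⌋ = ⌊(a e' - θ₀)/ε⌋ := hfl
    have g1 := Int.floor_le ((a e - θ₀)/ε)
    have g2 := Int.lt_floor_add_one ((a e - θ₀)/ε)
    have g3 := Int.floor_le ((a e' - θ₀)/ε)
    have g4 := Int.lt_floor_add_one ((a e' - θ₀)/ε)
    rw [hfl1] at g1 g2
    have k1 : a e - a e' < ε := by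
      have := key (a e - θ₀) (a e' - θ₀) (by linarith)
      linarith
    have k2 : a e' - a e < ε := by
      have := key (a e' - θ₀) (a e - θ₀) (by linarith)
      linarith
    have : |a e - a e'| < ε := abs_lt.2 ⟨by linarith, k1⟩
    linarith
  have himg : (fun e => ⌊(a e - θ₀)/ε⌋) '' S ⊆ Icc (0:ℤ) ⌊2*Real.pi/ε⌋ := by
    rintro m ⟨e, heS, rfl⟩
    have he := heS.1
    have ha1 := h1 e he
    have ha2 := (h2 e he).le.trans (h3 e he)
    constructor
    · apply Int.floor_nonneg.2
      have : (0:ℝ) ≤ a e - θ₀ := by linarith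
      positivity
    · apply Int.floor_le_floor
      exact (div_le_div_iff_of_pos_right hε).2 (by linarith)
  exact Set.Finite.of_finite_image ((Set.finite_Icc _ _).subset himg) hinj

end metric

section closedness

variable {X : Type*} [MetricSpace X] [CompactSpace X] [ConnectedSpace X] {g : Circle → X}

set_option linter.unusedSectionVars false

/-- The union of `A` with the closures of all free arcs avoiding (in closure) `B`
is closed, provided the ground space is `A ∪ B`. -/
lemma side_closed (hg : Continuous g) (hsurj : Function.Surjective g)
    (hE : EdgewiseEulerian g) {θ₀ : ℝ} (hθ₀ : g (Circle.exp θ₀) ∈ ground X)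
    {A B : Set X} (hA : IsClosed A) (hAB : A ∪ B = ground X) :
    IsClosed (A ∪ ⋃ e ∈ {e : Set X | IsFreeArc e ∧ closure e ∩ B = ∅}, closure e) := by
  classical
  set F := A ∪ ⋃ e ∈ {e : Set X | IsFreeArc e ∧ closure e ∩ B = ∅}, closure e with hF
  have hzg : (ground X).Nonempty := ⟨_, hθ₀⟩
  -- every arc in the family has its boundary inside A
  have hbdA : ∀ e : Set X, IsFreeArc e → closure e ∩ B = ∅ → (closure e ∩ A).Nonempty := by
    intro e he heB
    obtain ⟨hne, hsub⟩ := freeArc_boundary hg hsurj hE hzg he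
    obtain ⟨p, hp⟩ := hne
    have := hsub hp
    rw [← hAB] at this
    rcases this with h | h
    · exact ⟨p, hp.1, h⟩
    · exact absurd (mem_inter hp.1 h) (by rw [heB]; simp)
  rw [← closure_subset_iff_isClosed]
  intro x hx
  by_contra hxF
  have hxA : x ∉ A := fun h => hxF (Or.inl h)
  obtain ⟨r₁, hr₁, hball⟩ := Metric.isOpen_iff.1 hA.isOpen_compl x hxA
  set δ := r₁/2 with hδdef
  have hδ : 0 < δ := by positivity
  have hfin : {e : Set X | IsFreeArc e ∧ δ ≤ Metric.diam (closure e)}.Finite :=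
    finite_big_arcs hg hsurj hE hθ₀ hδ
  set T := {e : Set X | (IsFreeArc e ∧ δ ≤ Metric.diam (closure e)) ∧ closure e ∩ B = ∅} with hT
  have hTfin : T.Finite := hfin.subset (fun e he => he.1)
  have hN : IsOpen (⋂ e ∈ T, (closure e)ᶜ) :=
    hTfin.isOpen_biInter (fun e _ => isClosed_closure.isOpen_compl)
  have hxN : x ∈ ⋂ e ∈ T, (closure e)ᶜ := by
    simp only [mem_iInter, mem_compl_iff]
    intro e heT
    intro hxe
    exact hxF (Or.inr (mem_biUnion (⟨heT.1.1, heT.2⟩ :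
      e ∈ {e : Set X | IsFreeArc e ∧ closure e ∩ B = ∅}) hxe))
  have hopen : IsOpen (Metric.ball x δ ∩ ⋂ e ∈ T, (closure e)ᶜ) := Metric.isOpen_ball.inter hN
  have hxmem : x ∈ Metric.ball x δ ∩ ⋂ e ∈ T, (closure e)ᶜ :=
    ⟨Metric.mem_ball_self hδ, hxN⟩
  obtain ⟨y, hy1, hy2⟩ := mem_closure_iff.1 hx _ hopen hxmem
  rcases hy2 with hyA | hyU
  · have : y ∈ Metric.ball x r₁ := by
      have := hy1.1
      rw [Metric.mem_ball] at this ⊢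
      have : dist y x < δ := this
      linarith
    exact hball this hyA
  · obtain ⟨e, heP, hye⟩ := mem_iUnion₂.1 hyU
    obtain ⟨he, heB⟩ := heP
    rcases le_or_gt δ (Metric.diam (closure e)) with hbig | hsmall
    · have heT : e ∈ T := ⟨⟨he, hbig⟩, heB⟩
      have := mem_iInter₂.1 hy1.2 e heT
      exact this hye
    · obtain ⟨p, hpe, hpA⟩ := hbdA e he heB
      have hbd : Bornology.IsBounded (closure e) :=
        (isClosed_closure.isCompact).isBounded
      have hdyp : dist y p ≤ Metric.diam (closure e) := Metric.dist_le_diam_of_mem hbd hye hpe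
      have hdxy : dist x y < δ := by
        have := hy1.1; rwa [Metric.mem_ball, dist_comm] at this
      have : dist x p < r₁ := by
        calc dist x p ≤ dist x y + dist y p := dist_triangle x y p
        _ < δ + δ := by linarith
        _ = r₁ := by rw [hδdef]; ring
      exact hball (by rwa [Metric.mem_ball, dist_comm]) hpA

end closedness

/-! ### The parity lemma on the line -/

lemma preconn_subset_side {F₀ F₁ : Set ℝ} (hF₀ : IsClosed F₀) (hF₁ : IsClosed F₁)
    (hdisj : Disjoint F₀ F₁) {s : Set ℝ} (hs : IsPreconnected s) (hsub : s ⊆ F₀ ∪ F₁) :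
    s ⊆ F₀ ∨ s ⊆ F₁ := by
  by_contra hc
  push_neg at hc
  obtain ⟨h0, h1⟩ := hc
  obtain ⟨p, hps, hp0⟩ := not_subset.1 h0
  obtain ⟨q, hqs, hq1⟩ := not_subset.1 h1
  have hcov : s ⊆ F₁ᶜ ∪ F₀ᶜ := by
    intro z hz
    rcases hsub hz with h | h
    · exact Or.inl (fun hz1 => (Set.disjoint_left.1 hdisj) h hz1)
    · exact Or.inr (fun hz0 => (Set.disjoint_left.1 hdisj) hz0 h)
  have hne1 : (s ∩ F₁ᶜ).Nonempty := by
    refine ⟨q, hqs, ?_⟩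
    rcases hsub hqs with h | h
    · exact fun hq => (Set.disjoint_left.1 hdisj) h hq
    · exact absurd h hq1
  have hne2 : (s ∩ F₀ᶜ).Nonempty := by
    refine ⟨p, hps, ?_⟩
    rcases hsub hps with h | h
    · exact absurd h hp0
    · exact fun hp => (Set.disjoint_left.1 hdisj) hp h
  obtain ⟨z, hzs, hz1, hz0⟩ := hs _ _ hF₁.isOpen_compl hF₀.isOpen_compl hcov hne1 hne2
  rcases hsub hzs with h | h
  · exact hz0 h
  · exact hz1 h

lemma parity_lemma {F₀ F₁ : Set ℝ} (hF₀ : IsClosed F₀) (hF₁ : IsClosed F₁)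
    (hdisj : Disjoint F₀ F₁) :
    ∀ (S : Finset (ℝ × ℝ)) (c d : ℝ), c ≤ d →
    (∀ p ∈ S, c ≤ p.1 ∧ p.1 < p.2 ∧ p.2 ≤ d) →
    (∀ p ∈ S, ∀ q ∈ S, p ≠ q → Ioo p.1 p.2 ∩ Ioo q.1 q.2 = ∅) →
    (∀ p ∈ S, Ioo p.1 p.2 ∩ (F₀ ∪ F₁) = ∅) →
    (∀ p ∈ S, (p.1 ∈ F₀ ∧ p.2 ∈ F₁) ∨ (p.1 ∈ F₁ ∧ p.2 ∈ F₀)) →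
    (Icc c d \ ⋃ p ∈ S, Ioo p.1 p.2 ⊆ F₀ ∪ F₁) →
    (Even S.card ↔ ((c ∈ F₀ ∧ d ∈ F₀) ∨ (c ∈ F₁ ∧ d ∈ F₁))) := by
  intro S
  induction S using Finset.strongInduction with
  | _ S ih =>
    intro c d hcd hbnd hdisjI hIF hcross hcov
    rcases S.eq_empty_or_nonempty with rfl | hSne
    · simp only [Finset.card_empty, Even.zero, true_iff]
      have hsub : Icc c d ⊆ F₀ ∪ F₁ := by
        intro y hy
        apply hcov
        simp [hy]
      rcases preconn_subset_side hF₀ hF₁ hdisj isPreconnected_Icc hsub with h | h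
      · exact Or.inl ⟨h (left_mem_Icc.2 hcd), h (right_mem_Icc.2 hcd)⟩
      · exact Or.inr ⟨h (left_mem_Icc.2 hcd), h (right_mem_Icc.2 hcd)⟩
    · obtain ⟨p, hpS, hpmin⟩ := S.exists_min_image (fun p => p.1) hSne
      obtain ⟨hcp1, hp12, hp2d⟩ := hbnd p hpS
      set S' := S.erase p with hS'
      -- points of S' start after p.2
      have hafter : ∀ q ∈ S', p.2 ≤ q.1 := by
        intro q hqS'
        have hqS : q ∈ S := Finset.mem_of_mem_erase hqS'
        have hqne : q ≠ p := Finset.ne_of_mem_erase hqS'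
        have hq1 : p.1 ≤ q.1 := hpmin q hqS
        have hq1F : q.1 ∈ F₀ ∪ F₁ := by
          rcases hcross q hqS with ⟨h, _⟩ | ⟨h, _⟩
          · exact Or.inl h
          · exact Or.inr h
        have hq1notI : q.1 ∉ Ioo p.1 p.2 := by
          intro hmem
          have := hIF p hpS
          rw [eq_empty_iff_forall_notMem] at this
          exact this q.1 ⟨hmem, hq1F⟩
        have hqereal : q.1 ≠ p.1 := by
          intro heq
          obtain ⟨_, hq12, _⟩ := hbnd q hqS
          have hm : p.1 < min p.2 q.2 := lt_min hp12 (heq ▸ hq12)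
          have ht1 : p.1 < (p.1 + min p.2 q.2)/2 := by linarith
          have ht2 : (p.1 + min p.2 q.2)/2 < min p.2 q.2 := by linarith
          have hmem : (p.1 + min p.2 q.2)/2 ∈ Ioo p.1 p.2 ∩ Ioo q.1 q.2 :=
            ⟨⟨ht1, ht2.trans_le (min_le_left _ _)⟩,
             ⟨heq ▸ ht1, ht2.trans_le (min_le_right _ _)⟩⟩
          rw [hdisjI p hpS q hqS (Ne.symm hqne)] at hmem
          exact hmem
        rcases lt_or_ge q.1 p.2 with h | h
        · exact absurd ⟨hq1.lt_of_ne (Ne.symm hqereal), h⟩ hq1notI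
        · exact h
      -- matching of c with p.1
      have hcc : c ∈ F₀ ∪ F₁ := by
        apply hcov
        refine ⟨left_mem_Icc.2 hcd, ?_⟩
        simp only [mem_iUnion, not_exists]
        intro q hqS hmem
        exact absurd ((hbnd q hqS).1.trans_lt hmem.1) (lt_irrefl c)
      have hdd : d ∈ F₀ ∪ F₁ := by
        apply hcov
        refine ⟨right_mem_Icc.2 hcd, ?_⟩
        simp only [mem_iUnion, not_exists]
        intro q hqS hmem
        exact absurd (hmem.2.trans_le (hbnd q hqS).2.2) (lt_irrefl d)
      have hsame : (c ∈ F₀ ∧ p.1 ∈ F₀) ∨ (c ∈ F₁ ∧ p.1 ∈ F₁) := by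
        have hsub : Icc c p.1 ⊆ F₀ ∪ F₁ := by
          intro y hy
          apply hcov
          refine ⟨⟨hy.1, hy.2.trans (hp12.le.trans hp2d)⟩, ?_⟩
          simp only [mem_iUnion, not_exists]
          intro q hqS hmem
          exact absurd ((hpmin q hqS).trans_lt hmem.1) (not_lt.2 hy.2)
        rcases preconn_subset_side hF₀ hF₁ hdisj isPreconnected_Icc hsub with h | h
        · exact Or.inl ⟨h (left_mem_Icc.2 hcp1), h (right_mem_Icc.2 hcp1)⟩
        · exact Or.inr ⟨h (left_mem_Icc.2 hcp1), h (right_mem_Icc.2 hcp1)⟩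
      -- apply the induction hypothesis on S' with left endpoint p.2
      have hp2F : p.2 ∈ F₀ ∪ F₁ := by
        rcases hcross p hpS with ⟨_, h⟩ | ⟨_, h⟩
        · exact Or.inr h
        · exact Or.inl h
      have hih := ih S' (Finset.erase_ssubset hpS) p.2 d (hp2d)
        (fun q hq => ⟨hafter q hq, ((hbnd q (Finset.mem_of_mem_erase hq)).2.1),
          ((hbnd q (Finset.mem_of_mem_erase hq)).2.2)⟩)
        (fun q hq r hr hqr => hdisjI q (Finset.mem_of_mem_erase hq) r
          (Finset.mem_of_mem_erase hr) hqr)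
        (fun q hq => hIF q (Finset.mem_of_mem_erase hq))
        (fun q hq => hcross q (Finset.mem_of_mem_erase hq))
        (by
          intro y hy
          apply hcov
          refine ⟨⟨(hcp1.trans (hp12.le.trans hy.1.1)), hy.1.2⟩, ?_⟩
          simp only [mem_iUnion, not_exists]
          intro q hqS hmem
          rcases eq_or_ne q p with rfl | hqp
          · exact absurd (hmem.2.trans_le hy.1.1) (lt_irrefl y)
          · have hqS' : q ∈ S' := Finset.mem_erase.2 ⟨hqp, hqS⟩
            have := hy.2
            simp only [mem_iUnion, not_exists] at this
            exact this q hqS' hmem)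
      have hcard : S.card = S'.card + 1 := (Finset.card_erase_add_one hpS).symm
      rw [hcard, Nat.even_add_one, hih]
      have hDJ : ∀ x : ℝ, x ∈ F₀ → x ∈ F₁ → False := fun x h0 h1 =>
        (Set.disjoint_left.1 hdisj) h0 h1
      have hcF := hcc
      have hdF := hdd
      have hcrossp := hcross p hpS
      constructor
      · intro hnot
        rcases hsame with ⟨hc0, hp10⟩ | ⟨hc1, hp11⟩
        · rcases hcrossp with ⟨_, hp21⟩ | ⟨hp11', _⟩
          · -- p.2 ∈ F₁; d must be in F₀ (else hnot fails? )
            rcases hdF with hd0 | hd1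
            · exact Or.inl ⟨hc0, hd0⟩
            · exact absurd (Or.inr ⟨hp21, hd1⟩) hnot
          · exact absurd (hDJ p.1 hp10 hp11') (fun h => h)
        · rcases hcrossp with ⟨hp10', _⟩ | ⟨_, hp20⟩
          · exact absurd (hDJ p.1 hp10' hp11) (fun h => h)
          · rcases hdF with hd0 | hd1
            · exact absurd (Or.inl ⟨hp20, hd0⟩) hnot
            · exact Or.inr ⟨hc1, hd1⟩
      · intro hcd'
        intro hp2d'
        rcases hsame with ⟨hc0, hp10⟩ | ⟨hc1, hp11⟩
        · rcases hcrossp with ⟨_, hp21⟩ | ⟨hp11', _⟩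
          · rcases hcd' with ⟨_, hd0⟩ | ⟨hc1, _⟩
            · rcases hp2d' with ⟨hp20, _⟩ | ⟨_, hd1⟩
              · exact hDJ p.2 hp20 hp21
              · exact hDJ d hd0 hd1
            · exact hDJ c hc0 hc1
          · exact hDJ p.1 hp10 hp11'
        · rcases hcrossp with ⟨hp10', _⟩ | ⟨_, hp20⟩
          · exact hDJ p.1 hp10' hp11
          · rcases hcd' with ⟨hc0, _⟩ | ⟨_, hd1⟩
            · exact hDJ c hc0 hc1
            · rcases hp2d' with ⟨_, hd0⟩ | ⟨hp21, _⟩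
              · exact hDJ d hd0 hd1
              · exact hDJ p.2 hp20 hp21

/-- If a Peano continuum admits an edge-wise Eulerian map from the
circle, then it satisfies the even-cut condition. -/
theorem stmt_18 {X : Type*} [TopologicalSpace X] [CompactSpace X] [ConnectedSpace X]
    [LocallyConnectedSpace X] [TopologicalSpace.MetrizableSpace X] [Nonempty X]
    (g : Circle → X) (hg : Continuous g) (hsurj : Function.Surjective g)
    (hE : EdgewiseEulerian g) :
    EvenCutCondition X := by
  letI : MetricSpace X := TopologicalSpace.metrizableSpaceMetric X
  intro A B hA hB hAne hBne hABdisj hABground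
  classical
  have hπ := Real.pi_pos
  obtain ⟨z, hzA⟩ := hAne
  have hzg : z ∈ ground X := by rw [← hABground]; exact Or.inl hzA
  obtain ⟨tz, htz⟩ := hsurj z
  obtain ⟨θ₀, _, hθexp⟩ := exp_rep 0 tz
  have hθ₀ : g (Circle.exp θ₀) ∈ ground X := by rw [hθexp, htz]; exact hzg
  have hθ₀A : g (Circle.exp θ₀) ∈ A := by rw [hθexp, htz]; exact hzA
  -- positive separation between A and B
  obtain ⟨r, hr, hthick⟩ := hABdisj.exists_thickenings hA.isCompact hB
  have hsep : ∀ p ∈ A, ∀ q ∈ B, r ≤ dist p q := by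
    intro p hp q hq
    by_contra hc
    push_neg at hc
    have h1 : q ∈ Metric.thickening r A :=
      Metric.mem_thickening_iff.2 ⟨p, hp, by rwa [dist_comm]⟩
    have h2 : q ∈ Metric.thickening r B :=
      Metric.mem_thickening_iff.2 ⟨q, hq, by simpa using hr⟩
    exact Set.disjoint_left.1 hthick h1 h2
  -- finiteness of the cut
  have hcut_sub : edgeCut A B ⊆ {e : Set X | IsFreeArc e ∧ r ≤ Metric.diam (closure e)} := by
    rintro e ⟨he, ⟨p, hpc, hpA⟩, ⟨q, hqc, hqB⟩⟩
    refine ⟨he, ?_⟩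
    have hbd : Bornology.IsBounded (closure e) := isClosed_closure.isCompact.isBounded
    calc r ≤ dist p q := hsep p hpA q hqB
    _ ≤ Metric.diam (closure e) := Metric.dist_le_diam_of_mem hbd hpc hqc
  have hfin : (edgeCut A B).Finite := (finite_big_arcs hg hsurj hE hθ₀ hr).subset hcut_sub
  refine ⟨hfin, ?_⟩
  -- arc data
  have hst : ∀ e : Set X, IsFreeArc e → ∃ a b : ℝ, θ₀ ≤ a ∧ a < b ∧ b ≤ θ₀ + 2*Real.pi ∧
      g ⁻¹' e = Circle.exp '' Ioo a b ∧
      (∀ t ∈ Icc θ₀ (θ₀ + 2*Real.pi), g (Circle.exp t) ∈ e → t ∈ Ioo a b) ∧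
      closure e = (fun t => g (Circle.exp t)) '' Icc a b ∧
      closure e = e ∪ {g (Circle.exp a), g (Circle.exp b)} ∧
      g (Circle.exp a) ∉ e ∧ g (Circle.exp b) ∉ e :=
    fun e he => arcData hg hsurj hE hθ₀ he
  choose! a b h1 h2 h3 h4 h5 h6 h7 using hst
  -- the two sides
  set FA : Set X := A ∪ ⋃ e ∈ {e : Set X | IsFreeArc e ∧ closure e ∩ B = ∅}, closure e with hFA
  set FB : Set X := B ∪ ⋃ e ∈ {e : Set X | IsFreeArc e ∧ closure e ∩ A = ∅}, closure e with hFB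
  have hFAc : IsClosed FA := side_closed hg hsurj hE hθ₀ hA hABground
  have hFBc : IsClosed FB := side_closed hg hsurj hE hθ₀ hB (by rw [union_comm]; exact hABground)
  have hgrne : (ground X).Nonempty := ⟨z, hzg⟩
  -- ground points are in no free arc
  have hgnotin : ∀ x ∈ ground X, ∀ e : Set X, IsFreeArc e → x ∉ e := fun x hx => hx
  -- closure of side arcs
  have hcloA : ∀ e : Set X, IsFreeArc e → closure e ∩ B = ∅ → closure e ⊆ e ∪ A := by
    intro e he heB x hx
    by_cases hxe : x ∈ e
    · exact Or.inl hxe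
    · have hxg := (freeArc_boundary hg hsurj hE hgrne he).2 ⟨hx, hxe⟩
      rw [← hABground] at hxg
      rcases hxg with h | h
      · exact Or.inr h
      · exact absurd (mem_inter hx h) (by rw [heB]; simp)
  have hcloB : ∀ e : Set X, IsFreeArc e → closure e ∩ A = ∅ → closure e ⊆ e ∪ B := by
    intro e he heA x hx
    by_cases hxe : x ∈ e
    · exact Or.inl hxe
    · have hxg := (freeArc_boundary hg hsurj hE hgrne he).2 ⟨hx, hxe⟩
      rw [← hABground] at hxg
      rcases hxg with h | h
      · exact absurd (mem_inter hx h) (by rw [heA]; simp)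
      · exact Or.inr h
  -- the two sides are disjoint
  have hFdisj : Disjoint FA FB := by
    rw [Set.disjoint_left]
    rintro x (hxA | hxU) (hxB | hxU')
    · exact Set.disjoint_left.1 hABdisj hxA hxB
    · obtain ⟨e', he'P, hxe'⟩ := mem_iUnion₂.1 hxU'
      exact absurd (mem_inter hxe' hxA) (by rw [he'P.2]; simp)
    · obtain ⟨e, heP, hxe⟩ := mem_iUnion₂.1 hxU
      exact absurd (mem_inter hxe hxB) (by rw [heP.2]; simp)
    · obtain ⟨e, heP, hxe⟩ := mem_iUnion₂.1 hxU
      obtain ⟨e', he'P, hxe'⟩ := mem_iUnion₂.1 hxU'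
      rcases hcloA e heP.1 heP.2 hxe with hxe1 | hxA
      · rcases hcloB e' he'P.1 he'P.2 hxe' with hxe2 | hxB
        · have hne : e ≠ e' := by
            rintro rfl
            obtain ⟨⟨p, hp⟩, hsub⟩ := freeArc_boundary hg hsurj hE hgrne heP.1
            have hpg := hsub hp
            rw [← hABground] at hpg
            rcases hpg with h | h
            · exact absurd (mem_inter hp.1 h) (by rw [he'P.2]; simp)
            · exact absurd (mem_inter hp.1 h) (by rw [heP.2]; simp)
          have := freeArc_disjoint hg hsurj hE hgrne heP.1 he'P.1 hne
          exact absurd (mem_inter hxe1 hxe2) (by rw [this]; simp)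
        · exact hgnotin x (by rw [← hABground]; exact Or.inr hxB) e heP.1 hxe1
      · rcases hcloB e' he'P.1 he'P.2 hxe' with hxe2 | hxB
        · exact hgnotin x (by rw [← hABground]; exact Or.inl hxA) e' he'P.1 hxe2
        · exact Set.disjoint_left.1 hABdisj hxA hxB
  -- points not in cut edges are in FA ∪ FB
  have hFunion : ∀ x : X, (∀ e ∈ edgeCut A B, x ∉ e) → x ∈ FA ∪ FB := by
    intro x hx
    by_cases hxg : x ∈ ground X
    · rw [← hABground] at hxg
      rcases hxg with h | h
      · exact Or.inl (Or.inl h)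
      · exact Or.inr (Or.inl h)
    · simp only [ground, mem_setOf_eq, not_forall] at hxg
      obtain ⟨e, he, hxe⟩ := hxg
      rw [not_not] at hxe
      by_cases heB : closure e ∩ B = ∅
      · exact Or.inl (Or.inr (mem_biUnion (⟨he, heB⟩ : e ∈ {e : Set X | IsFreeArc e ∧
          closure e ∩ B = ∅}) (subset_closure hxe)))
      by_cases heA : closure e ∩ A = ∅
      · exact Or.inr (Or.inr (mem_biUnion (⟨he, heA⟩ : e ∈ {e : Set X | IsFreeArc e ∧
          closure e ∩ A = ∅}) (subset_closure hxe)))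
      · exact absurd hxe (hx e ⟨he, nonempty_iff_ne_empty.2 heA, nonempty_iff_ne_empty.2 heB⟩)
  -- cut edges are disjoint from FA ∪ FB
  have hcutF : ∀ e ∈ edgeCut A B, ∀ x ∈ e, x ∉ FA ∪ FB := by
    rintro e ⟨he, heA, heB⟩ x hxe hmem
    have hxng : x ∉ ground X := fun h => hgnotin x h e he hxe
    rcases hmem with hFA' | hFB'
    · rcases hFA' with hxA | hxU
      · exact hxng (by rw [← hABground]; exact Or.inl hxA)
      · obtain ⟨e'', he''P, hxe''⟩ := mem_iUnion₂.1 hxU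
        rcases hcloA e'' he''P.1 he''P.2 hxe'' with hxe2 | hxA
        · have hne : e ≠ e'' := by
            rintro rfl
            exact absurd heB.ne_empty (by rw [he''P.2]; simp)
          have := freeArc_disjoint hg hsurj hE hgrne he he''P.1 hne
          exact absurd (mem_inter hxe hxe2) (by rw [this]; simp)
        · exact hxng (by rw [← hABground]; exact Or.inl hxA)
    · rcases hFB' with hxB | hxU
      · exact hxng (by rw [← hABground]; exact Or.inr hxB)
      · obtain ⟨e'', he''P, hxe''⟩ := mem_iUnion₂.1 hxU
        rcases hcloB e'' he''P.1 he''P.2 hxe'' with hxe2 | hxB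
        · have hne : e ≠ e'' := by
            rintro rfl
            exact absurd heA.ne_empty (by rw [he''P.2]; simp)
          have := freeArc_disjoint hg hsurj hE hgrne he he''P.1 hne
          exact absurd (mem_inter hxe hxe2) (by rw [this]; simp)
        · exact hxng (by rw [← hABground]; exact Or.inr hxB)
  -- the finite set of intervals
  set Sfin := hfin.toFinset with hSfin
  have hSmem : ∀ e, e ∈ Sfin ↔ e ∈ edgeCut A B := fun e => hfin.mem_toFinset
  have hpinj : Set.InjOn (fun e => (a e, b e)) ↑Sfin := by
    rintro e heS e' heS' hpq
    by_contra hne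
    have he := ((hSmem e).1 heS).1
    have he' := ((hSmem e').1 heS').1
    have hdisj := intervals_disjoint hg hsurj hE hθ₀ he he' hne (h4 e he) (h4 e' he')
    have hpq1 : a e = a e' := congrArg Prod.fst hpq
    have hpq2 : b e = b e' := congrArg Prod.snd hpq
    rw [← hpq1, ← hpq2, inter_self] at hdisj
    exact absurd hdisj (nonempty_Ioo.2 (h2 e he)).ne_empty
  set S : Finset (ℝ × ℝ) := Sfin.image (fun e => (a e, b e)) with hS
  have hScard : S.card = Sfin.card := Finset.card_image_of_injOn hpinj
  -- the real sides
  set F₀ : Set ℝ := (fun t => g (Circle.exp t)) ⁻¹' FA with hF₀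
  set F₁ : Set ℝ := (fun t => g (Circle.exp t)) ⁻¹' FB with hF₁
  have hF₀c : IsClosed F₀ := hFAc.preimage (hg.comp Circle.exp.continuous)
  have hF₁c : IsClosed F₁ := hFBc.preimage (hg.comp Circle.exp.continuous)
  have hF01 : Disjoint F₀ F₁ := hFdisj.preimage _
  -- crossing data for each cut edge
  have hcross : ∀ e ∈ edgeCut A B,
      (g (Circle.exp (a e)) ∈ A ∧ g (Circle.exp (b e)) ∈ B) ∨
      (g (Circle.exp (a e)) ∈ B ∧ g (Circle.exp (b e)) ∈ A) := by
    rintro e ⟨he, ⟨p, hpc, hpA⟩, ⟨q, hqc, hqB⟩⟩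
    have hpg : p ∈ ground X := by rw [← hABground]; exact Or.inl hpA
    have hqg : q ∈ ground X := by rw [← hABground]; exact Or.inr hqB
    have hpe : p ∉ e := hgnotin p hpg e he
    have hqe : q ∉ e := hgnotin q hqg e he
    have hpc' := (h7 e he).1 ▸ hpc
    have hqc' := (h7 e he).1 ▸ hqc
    rcases hpc' with hp | hp
    · exact absurd hp hpe
    rcases hqc' with hq | hq
    · exact absurd hq hqe
    have hpq : p ≠ q := fun h => Set.disjoint_left.1 hABdisj hpA (h ▸ hqB)
    rcases hp with rfl | hp
    · rcases hq with rfl | hq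
      · exact absurd rfl hpq
      · rw [mem_singleton_iff] at hq
        exact Or.inl ⟨hpA, hq ▸ hqB⟩
    · rw [mem_singleton_iff] at hp
      rcases hq with rfl | hq
      · exact Or.inr ⟨hqB, hp ▸ hpA⟩
      · rw [mem_singleton_iff] at hq
        exact absurd (hp.trans hq.symm) hpq
  -- apply the parity lemma
  have hpar := parity_lemma hF₀c hF₁c hF01 S θ₀ (θ₀ + 2*Real.pi) (by linarith)
    (by
      rintro p hp
      obtain ⟨e, heS, rfl⟩ := Finset.mem_image.1 hp
      have he := ((hSmem e).1 heS).1
      exact ⟨h1 e he, h2 e he, h3 e he⟩)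
    (by
      rintro p hp q hq hpq
      obtain ⟨e, heS, rfl⟩ := Finset.mem_image.1 hp
      obtain ⟨e', heS', rfl⟩ := Finset.mem_image.1 hq
      have hne : e ≠ e' := fun h => hpq (by rw [h])
      exact intervals_disjoint hg hsurj hE hθ₀ ((hSmem e).1 heS).1 ((hSmem e').1 heS').1 hne
        (h4 e ((hSmem e).1 heS).1) (h4 e' ((hSmem e').1 heS').1))
    (by
      rintro p hp
      obtain ⟨e, heS, rfl⟩ := Finset.mem_image.1 hp
      have hecut := (hSmem e).1 heS
      have he := hecut.1
      rw [eq_empty_iff_forall_notMem]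
      rintro t ⟨htI, htF⟩
      have : Circle.exp t ∈ g ⁻¹' e := by rw [h4 e he]; exact ⟨t, htI, rfl⟩
      exact hcutF e hecut _ this htF)
    (by
      rintro p hp
      obtain ⟨e, heS, rfl⟩ := Finset.mem_image.1 hp
      have hecut := (hSmem e).1 heS
      rcases hcross e hecut with ⟨hpa, hpb⟩ | ⟨hpa, hpb⟩
      · exact Or.inl ⟨Or.inl hpa, Or.inl hpb⟩
      · exact Or.inr ⟨Or.inl hpa, Or.inl hpb⟩)
    (by
      rintro y ⟨hyI, hyU⟩
      by_cases hy : ∀ e ∈ edgeCut A B, g (Circle.exp y) ∉ e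
      · exact hFunion _ hy
      · push_neg at hy
        obtain ⟨e, hecut, hye⟩ := hy
        have he := hecut.1
        have hmem : y ∈ Ioo (a e) (b e) := h5 e he y hyI hye
        exfalso
        apply hyU
        simp only [mem_iUnion]
        exact ⟨(a e, b e), ⟨Finset.mem_image.2 ⟨e, (hSmem e).2 hecut, rfl⟩, hmem⟩⟩)
  -- endpoints on side A
  have hc0 : θ₀ ∈ F₀ := by
    show g (Circle.exp θ₀) ∈ FA
    exact Or.inl hθ₀A
  have hd0 : θ₀ + 2*Real.pi ∈ F₀ := by
    show g (Circle.exp (θ₀ + 2*Real.pi)) ∈ FA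
    rw [show Circle.exp (θ₀ + 2*Real.pi) = Circle.exp θ₀ from Circle.periodic_exp θ₀]
    exact Or.inl hθ₀A
  have hEven : Even S.card := hpar.2 (Or.inl ⟨hc0, hd0⟩)
  rw [Set.ncard_eq_toFinset_card _ hfin]
  rw [hScard] at hEven
  exact hEven
end
end
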